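/- Let k ≥ 1 be an integer and let x_1,…,x_m and y_1,…,y_n be real numbers (m, n ≥ 1). Define φ(t) = (1/k!)((1/m)∑_{i=1}^m (x_i−t)_+^k − (1/n)∑_{j=1}^n (y_j−t)_+^k). Then for all 0 ≤ s ≤ t, |φ(t) − φ(s)| ≤ (t−s) · (1/(k−1)!) ((1/m)∑_{i=1}^m |x_i|^{k−1} + (1/n)∑_{j=1}^n |y_j|^{k−1}). -/

import Mathlib

open MeasureTheory Filter Set

lemma key_pow (a b c : ℝ) (ha : 0 ≤ a) (hb : 0 ≤ b) (hac : a ≤ c) (hbc : b ≤ c)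
    (k : ℕ) : |a ^ k - b ^ k| ≤ k * c ^ (k - 1) * |a - b| := by
  have hc : 0 ≤ c := le_trans ha hac
  rw [← geom_sum₂_mul, abs_mul]
  gcongr
  calc |∑ i ∈ Finset.range k, a ^ i * b ^ (k - 1 - i)|
      ≤ ∑ i ∈ Finset.range k, |a ^ i * b ^ (k - 1 - i)| :=
        Finset.abs_sum_le_sum_abs _ _
    _ ≤ ∑ _i ∈ Finset.range k, c ^ (k - 1) := by
        apply Finset.sum_le_sum
        intro i hi
        rw [Finset.mem_range] at hi
        rw [abs_of_nonneg (by positivity)]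
        calc a ^ i * b ^ (k - 1 - i) ≤ c ^ i * c ^ (k - 1 - i) := by gcongr
          _ = c ^ (k - 1) := by rw [← pow_add]; congr 1; omega
    _ = k * c ^ (k - 1) := by
        rw [Finset.sum_const, Finset.card_range, nsmul_eq_mul]

lemma key_term (xi s t : ℝ) (hs : 0 ≤ s) (hst : s ≤ t) (k : ℕ) :
    |max (xi - t) 0 ^ k - max (xi - s) 0 ^ k| ≤ k * |xi| ^ (k - 1) * (t - s) := by
  have ht : (0:ℝ) ≤ t := hs.trans hst
  have hac : max (xi - t) 0 ≤ |xi| :=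
    max_le (by linarith [le_abs_self xi]) (abs_nonneg xi)
  have hbc : max (xi - s) 0 ≤ |xi| :=
    max_le (by linarith [le_abs_self xi]) (abs_nonneg xi)
  have h1 := key_pow (max (xi - t) 0) (max (xi - s) 0) |xi|
    (le_max_right _ _) (le_max_right _ _) hac hbc k
  have h2 : |max (xi - t) 0 - max (xi - s) 0| ≤ t - s := by
    refine (abs_max_sub_max_le_abs _ _ _).trans ?_
    rw [show xi - t - (xi - s) = -(t - s) by ring, abs_neg,
      abs_of_nonneg (by linarith)]
  calc |max (xi - t) 0 ^ k - max (xi - s) 0 ^ k|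
      ≤ k * |xi| ^ (k - 1) * |max (xi - t) 0 - max (xi - s) 0| := h1
    _ ≤ k * |xi| ^ (k - 1) * (t - s) := by
        apply mul_le_mul_of_nonneg_left h2 (by positivity)

theorem stmt5 (k m n : ℕ) (hk : 1 ≤ k) (hm : 1 ≤ m) (hn : 1 ≤ n)
    (x : Fin m → ℝ) (y : Fin n → ℝ)
    (φ : ℝ → ℝ)
    (hφ : φ = fun t : ℝ => (1 / (Nat.factorial k : ℝ)) *
      ((1 / m : ℝ) * ∑ i, max (x i - t) 0 ^ k - (1 / n : ℝ) * ∑ j, max (y j - t) 0 ^ k))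
    (s t : ℝ) (hs : 0 ≤ s) (hst : s ≤ t) :
    |φ t - φ s| ≤ (t - s) * ((1 / (Nat.factorial (k - 1) : ℝ)) *
      ((1 / m : ℝ) * ∑ i, |x i| ^ (k - 1) + (1 / n : ℝ) * ∑ j, |y j| ^ (k - 1))) := by
  subst hφ
  simp only
  set A := ∑ i, |x i| ^ (k - 1) with hA
  set B := ∑ j, |y j| ^ (k - 1) with hB
  have hA0 : 0 ≤ A := Finset.sum_nonneg fun i _ => by positivity
  have hB0 : 0 ≤ B := Finset.sum_nonneg fun j _ => by positivity
  have hX : |(∑ i, max (x i - t) 0 ^ k) - ∑ i, max (x i - s) 0 ^ k|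
      ≤ (k : ℝ) * A * (t - s) := by
    rw [← Finset.sum_sub_distrib]
    refine (Finset.abs_sum_le_sum_abs _ _).trans ?_
    calc ∑ i, |max (x i - t) 0 ^ k - max (x i - s) 0 ^ k|
        ≤ ∑ i, (k : ℝ) * |x i| ^ (k - 1) * (t - s) :=
          Finset.sum_le_sum fun i _ => key_term (x i) s t hs hst k
      _ = (k : ℝ) * A * (t - s) := by
          rw [hA, Finset.mul_sum, Finset.sum_mul]
  have hY : |(∑ j, max (y j - t) 0 ^ k) - ∑ j, max (y j - s) 0 ^ k|
      ≤ (k : ℝ) * B * (t - s) := by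
    rw [← Finset.sum_sub_distrib]
    refine (Finset.abs_sum_le_sum_abs _ _).trans ?_
    calc ∑ j, |max (y j - t) 0 ^ k - max (y j - s) 0 ^ k|
        ≤ ∑ j, (k : ℝ) * |y j| ^ (k - 1) * (t - s) :=
          Finset.sum_le_sum fun j _ => key_term (y j) s t hs hst k
      _ = (k : ℝ) * B * (t - s) := by
          rw [hB, Finset.mul_sum, Finset.sum_mul]
  have hfacpos : (0:ℝ) < (Nat.factorial k : ℝ) := by positivity
  have hmpos : (0:ℝ) ≤ (1 / m : ℝ) := by positivity
  have hnpos : (0:ℝ) ≤ (1 / n : ℝ) := by positivity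
  have hfac : (k : ℝ) / (Nat.factorial k : ℝ) = 1 / (Nat.factorial (k - 1) : ℝ) := by
    have := Nat.mul_factorial_pred (Nat.pos_iff_ne_zero.mp (Nat.lt_of_lt_of_le Nat.zero_lt_one hk))
    rw [div_eq_div_iff hfacpos.ne' (by positivity), one_mul]
    rw [← this]
    push_cast
    ring
  calc |(1 / (Nat.factorial k : ℝ)) *
        ((1 / m : ℝ) * ∑ i, max (x i - t) 0 ^ k - (1 / n : ℝ) * ∑ j, max (y j - t) 0 ^ k) -
        (1 / (Nat.factorial k : ℝ)) *
        ((1 / m : ℝ) * ∑ i, max (x i - s) 0 ^ k - (1 / n : ℝ) * ∑ j, max (y j - s) 0 ^ k)|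
      = |1 / (Nat.factorial k : ℝ)| *
        |(1 / m : ℝ) * ((∑ i, max (x i - t) 0 ^ k) - ∑ i, max (x i - s) 0 ^ k) -
         (1 / n : ℝ) * ((∑ j, max (y j - t) 0 ^ k) - ∑ j, max (y j - s) 0 ^ k)| := by
        rw [← abs_mul]; congr 1; ring
    _ ≤ (1 / (Nat.factorial k : ℝ)) *
        ((1 / m : ℝ) * |(∑ i, max (x i - t) 0 ^ k) - ∑ i, max (x i - s) 0 ^ k| +
         (1 / n : ℝ) * |(∑ j, max (y j - t) 0 ^ k) - ∑ j, max (y j - s) 0 ^ k|) := by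
        rw [abs_of_nonneg (by positivity)]
        gcongr
        refine (abs_sub _ _).trans ?_
        rw [abs_mul, abs_mul, abs_of_nonneg hmpos, abs_of_nonneg hnpos]
    _ ≤ (1 / (Nat.factorial k : ℝ)) *
        ((1 / m : ℝ) * ((k : ℝ) * A * (t - s)) + (1 / n : ℝ) * ((k : ℝ) * B * (t - s))) := by
        gcongr
    _ = (t - s) * (((k : ℝ) / (Nat.factorial k : ℝ)) * ((1 / m : ℝ) * A + (1 / n : ℝ) * B)) := by
        ring
    _ = (t - s) * ((1 / (Nat.factorial (k - 1) : ℝ)) *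
        ((1 / m : ℝ) * A + (1 / n : ℝ) * B)) := by rw [hfac]
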